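/- Khintchine lower bound: let ε_1, …, ε_m be independent Rademacher (uniform ±1) random variables. Then E|∑_{i=1}^m ε_i| ≥ √m / √2. -/

import Mathlib

open Finset

private noncomputable def Tk (m : ℕ) : ℝ :=
  ∑ ε ∈ Fintype.piFinset (fun _ : Fin m => ({-1, 1} : Finset ℤ)), |∑ i, (ε i : ℝ)|

private def Zk (m : ℕ) : ℕ :=
  ((Fintype.piFinset (fun _ : Fin m => ({-1, 1} : Finset ℤ))).filter
    (fun ε => ∑ i, ε i = 0)).card

private lemma cb_nat : ∀ k : ℕ, 1 ≤ k → 16 ^ k ≤ 4 * k * (Nat.centralBinom k)^2 := by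
  intro k hk
  induction k with
  | zero => omega
  | succ n ih =>
    rcases Nat.eq_or_lt_of_le hk with h | h
    · simp [← h]; decide
    · have hn : 1 ≤ n := by omega
      have IH := ih hn
      have key : (n+1) * Nat.centralBinom (n+1) = 2 * (2*n+1) * Nat.centralBinom n :=
        Nat.succ_mul_centralBinom_succ n
      have hmul : (n+1) * (16 ^ (n+1)) ≤ (n+1) * (4 * (n+1) * (Nat.centralBinom (n+1))^2) := by
        have e : (n+1) * (4 * (n+1) * (Nat.centralBinom (n+1))^2)
            = 4 * ((n+1) * Nat.centralBinom (n+1))^2 := by ring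
        rw [e, key]
        have e2 : (n+1) * (16 ^ (n+1)) = 16 * (n+1) * 16 ^ n := by ring
        rw [e2]
        calc 16 * (n+1) * 16 ^ n ≤ 16 * (n+1) * (4 * n * (Nat.centralBinom n)^2) :=
              Nat.mul_le_mul_left _ IH
          _ ≤ 4 * (2 * (2*n+1) * Nat.centralBinom n)^2 := by nlinarith [Nat.centralBinom_pos n]
      exact Nat.le_of_mul_le_mul_left hmul (by omega)

private lemma cb_real (k : ℕ) (hk : 1 ≤ k) :
    (4:ℝ)^k ≤ 2 * Real.sqrt k * Nat.centralBinom k := by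
  have h1 : (0:ℝ) ≤ 4^k := by positivity
  have h2 : (0:ℝ) ≤ 2 * Real.sqrt k * Nat.centralBinom k := by positivity
  refine (pow_le_pow_iff_left₀ h1 h2 (two_ne_zero)).mp ?_
  have hs : Real.sqrt k ^ 2 = (k:ℝ) := Real.sq_sqrt (by positivity)
  have hc : (16:ℝ)^k ≤ 4 * k * (Nat.centralBinom k : ℝ)^2 := by
    exact_mod_cast cb_nat k hk
  calc ((4:ℝ)^k)^2 = 16^k := by rw [← pow_mul, pow_mul']; norm_num
    _ ≤ 4 * k * (Nat.centralBinom k : ℝ)^2 := hc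
    _ = (2 * Real.sqrt k * Nat.centralBinom k)^2 := by rw [mul_pow, mul_pow, hs]; ring

private lemma Zk_lb (k : ℕ) : Nat.centralBinom k ≤ Zk (2 * k) := by
  rw [Nat.centralBinom]
  have hpc := Finset.card_powersetCard k (Finset.univ : Finset (Fin (2*k)))
  rw [Finset.card_univ, Fintype.card_fin] at hpc
  rw [← hpc, Zk]
  apply Finset.card_le_card_of_injOn (fun s i => if i ∈ s then (1:ℤ) else -1)
  · intro s hs
    rw [Finset.mem_coe, Finset.mem_powersetCard_univ] at hs
    rw [Finset.mem_coe, Finset.mem_filter]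
    constructor
    · rw [Fintype.mem_piFinset]
      intro i
      by_cases h : i ∈ s <;> simp [h]
    · have e : ∑ i : Fin (2*k), (if i ∈ s then (1:ℤ) else -1)
          = ∑ i : Fin (2*k), ((if i ∈ s then (2:ℤ) else 0) - 1) := by
        apply Finset.sum_congr rfl; intro i _; by_cases h : i ∈ s <;> simp [h]
      rw [e, Finset.sum_sub_distrib, Finset.sum_ite_mem, Finset.univ_inter,
        Finset.sum_const, hs]
      simp; ring
  · intro s hs t ht hst
    ext i
    have := congrFun hst i
    by_cases h1 : i ∈ s <;> by_cases h2 : i ∈ t <;> simp [h1, h2] at this ⊢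

private lemma Tk_succ (m : ℕ) : 2 * Tk m + 2 * Zk m ≤ Tk (m + 1) := by
  have hsplit := Finset.filter_piFinset_eq_map_consEquiv
    (fun _ : Fin (m+1) => ({-1, 1} : Finset ℤ)) (fun _ => True)
  simp only [Finset.filter_true_of_mem (fun _ _ => trivial)] at hsplit
  conv_rhs => rw [Tk, hsplit]
  rw [Finset.sum_map, Finset.sum_product, Finset.sum_pair (by norm_num : (-1:ℤ) ≠ 1)]
  have hcons : ∀ (x : ℤ) (ε : Fin m → ℤ),
      ∑ i : Fin (m+1), (((Fin.consEquiv (fun _ => ℤ)).toEmbedding (x, ε)) i : ℝ)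
        = (x : ℝ) + ∑ i : Fin m, (ε i : ℝ) := by
    intro x ε
    simp [Fin.consEquiv, Fin.sum_univ_succ]
  simp only [hcons]
  rw [← Finset.sum_add_distrib]
  have hZ : (2:ℝ) * Zk m = ∑ ε ∈ Fintype.piFinset (fun _ : Fin m => ({-1, 1} : Finset ℤ)),
      (if (∑ i, ε i) = 0 then (2:ℝ) else 0) := by
    rw [Finset.sum_ite, Finset.sum_const, Finset.sum_const, Zk]
    simp [mul_comm]
  rw [Tk, Finset.mul_sum, hZ, ← Finset.sum_add_distrib]
  apply Finset.sum_le_sum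
  intro ε _
  set S : ℝ := ∑ i, (ε i : ℝ) with hS
  have hSz : S = ((∑ i, ε i : ℤ) : ℝ) := by push_cast [hS]; rfl
  by_cases h : (∑ i, ε i) = 0
  · rw [if_pos h]
    rw [hSz, h]
    push_cast
    norm_num
  · rw [if_neg h, add_zero]
    push_cast
    have h2 : |((-1:ℝ) + S) + (1 + S)| = 2 * |S| := by
      rw [show ((-1:ℝ)+S)+(1+S) = 2*S by ring, abs_mul]
      norm_num
    rw [← h2]
    exact abs_add_le _ _

private lemma core (k : ℕ) :
    Real.sqrt ((k:ℝ)+1) * 4^k ≤ Real.sqrt k * 4^k + (Nat.centralBinom k : ℝ) := by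
  rcases Nat.eq_zero_or_pos k with rfl | hk
  · simp [Nat.centralBinom]
  · set sk := Real.sqrt k with hsk
    set s1 := Real.sqrt ((k:ℝ)+1) with hs1
    have hsk2 : sk^2 = (k:ℝ) := Real.sq_sqrt (by positivity)
    have hs12 : s1^2 = (k:ℝ)+1 := Real.sq_sqrt (by positivity)
    have hskpos : 0 < sk := Real.sqrt_pos.mpr (by exact_mod_cast hk)
    have hs1pos : 0 ≤ s1 := Real.sqrt_nonneg _
    have hcb : (4:ℝ)^k ≤ 2 * sk * Nat.centralBinom k := cb_real k hk
    have h8 : 2 * sk * s1 ≤ 2*(k:ℝ) + 1 := by nlinarith [sq_nonneg (s1 - sk)]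
    have hp : (0:ℝ) < 4^k := by positivity
    have key : 2 * sk * (s1 * 4^k) ≤ 2 * sk * (sk * 4^k + Nat.centralBinom k) := by
      have h9 : 2 * sk * s1 * 4^k ≤ (2*(k:ℝ)+1) * 4^k :=
        mul_le_mul_of_nonneg_right h8 (le_of_lt hp)
      nlinarith
    exact le_of_mul_le_mul_left key (by positivity)

private lemma even_lb : ∀ k : ℕ, Real.sqrt k * 4^k ≤ Tk (2*k) := by
  intro k
  induction k with
  | zero => simp [Tk]
  | succ n ih =>
    have h1 := Tk_succ (2*n)
    have h2 := Tk_succ (2*n+1)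
    have hZ : (Nat.centralBinom n : ℝ) ≤ Zk (2*n) := by exact_mod_cast Zk_lb n
    have hZ1 : (0:ℝ) ≤ Zk (2*n+1) := by positivity
    have hc := core n
    have e : 2*(n+1) = 2*n+1+1 := by ring
    rw [e]
    have : Real.sqrt ((n:ℕ)+1 : ℕ) * 4^(n+1) = 4 * (Real.sqrt ((n:ℝ)+1) * 4^n) := by
      push_cast
      ring
    rw [this]
    nlinarith

private lemma odd_lb (k : ℕ) :
    Real.sqrt ((2*k+1 : ℕ) : ℝ) / Real.sqrt 2 * 2^(2*k+1) ≤ Tk (2*k+1) := by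
  have h1 := Tk_succ (2*k)
  have hZ : (Nat.centralBinom k : ℝ) ≤ Zk (2*k) := by exact_mod_cast Zk_lb k
  have hc := core k
  have ih := even_lb k
  have hs2 : (0:ℝ) < Real.sqrt 2 := Real.sqrt_pos.mpr (by norm_num)
  have hkey : Real.sqrt ((2*k:ℝ)+1) / Real.sqrt 2 * 2^(2*k+1)
      ≤ 2 * Real.sqrt ((k:ℝ)+1) * 4^k := by
    have h3 : Real.sqrt ((2*k:ℝ)+1) ≤ Real.sqrt 2 * Real.sqrt ((k:ℝ)+1) := by
      rw [← Real.sqrt_mul (by norm_num)]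
      apply Real.sqrt_le_sqrt
      nlinarith
    have hpow : (2:ℝ)^(2*k+1) = 2 * 4^k := by
      rw [pow_succ, pow_mul]
      norm_num
      ring
    rw [div_mul_eq_mul_div, div_le_iff₀ hs2, hpow]
    calc Real.sqrt ((2*k:ℝ)+1) * (2 * 4^k)
        ≤ (Real.sqrt 2 * Real.sqrt ((k:ℝ)+1)) * (2 * 4^k) := by
          apply mul_le_mul_of_nonneg_right h3; positivity
      _ = 2 * Real.sqrt ((k:ℝ)+1) * 4^k * Real.sqrt 2 := by ring
  have hcast : Real.sqrt ((2*k:ℕ)+1 : ℕ) = Real.sqrt ((2*k:ℝ)+1) := by push_cast; ring_nf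
  rw [hcast]
  calc Real.sqrt ((2*k:ℝ)+1) / Real.sqrt 2 * 2^(2*k+1)
      ≤ 2 * Real.sqrt ((k:ℝ)+1) * 4^k := hkey
    _ ≤ 2 * (Real.sqrt k * 4^k + Nat.centralBinom k) := by nlinarith
    _ ≤ Tk (2*k+1) := by nlinarith

theorem stmt13 (m : ℕ) :
    Real.sqrt m / Real.sqrt 2 ≤
      (1 / 2 ^ m : ℝ) *
        ∑ ε ∈ Fintype.piFinset (fun _ : Fin m => ({-1, 1} : Finset ℤ)),
          |∑ i, (ε i : ℝ)| := by
  have hT : (∑ ε ∈ Fintype.piFinset (fun _ : Fin m => ({-1, 1} : Finset ℤ)),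
      |∑ i, (ε i : ℝ)|) = Tk m := rfl
  rw [hT, one_div, inv_mul_eq_div, le_div_iff₀ (by positivity : (0:ℝ) < 2^m)]
  rcases Nat.even_or_odd m with ⟨k, hk⟩ | ⟨k, hk⟩
  · subst hk
    have := even_lb k
    have hs2 : (0:ℝ) < Real.sqrt 2 := Real.sqrt_pos.mpr (by norm_num)
    have hsqrt : Real.sqrt ((k+k:ℕ)) = Real.sqrt 2 * Real.sqrt k := by
      rw [← Real.sqrt_mul (by norm_num)]
      congr 1
      push_cast
      ring
    have hpow : (2:ℝ)^(k+k) = 4^k := by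
      rw [← two_mul, pow_mul]; norm_num
    rw [hsqrt, hpow, div_mul_eq_mul_div, div_le_iff₀ hs2]
    calc Real.sqrt 2 * Real.sqrt k * 4^k = (Real.sqrt k * 4^k) * Real.sqrt 2 := by ring
      _ ≤ Tk (k+k) * Real.sqrt 2 := by
          apply mul_le_mul_of_nonneg_right _ (le_of_lt hs2)
          rw [show k+k = 2*k by ring] at *
          exact this
  · subst hk
    have := odd_lb k
    rw [show 2*k+1 = 2*k+1 from rfl] at this
    calc Real.sqrt (2*k+1 : ℕ) / Real.sqrt 2 * 2^(2*k+1)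
        = Real.sqrt (2*k+1 : ℕ) / Real.sqrt 2 * 2^(2*k+1) := rfl
      _ ≤ Tk (2*k+1) := this
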